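/- K_1(𝔓) contains a homeomorphic copy of the Cantor set whenever there exist i ≠ j in m such that (i,j) and (j,i) belong to the same piece P of the partition 𝔓; indeed the subspace {f_{(z,P)} : z ∈ {i,j}^ω} is homeomorphic to the Cantor set. -/

import Mathlib

open Filter Topology

/-- `s` is an initial segment of the branch `x ∈ m^ω`. -/
def PrefixF {m : ℕ} (s : List (Fin m)) (x : ℕ → Fin m) : Prop :=
  ∀ k, (h : k < s.length) → s.get ⟨k, h⟩ = x k

/-- `IncFB y s (i, j)` is the incidence `inc(y, s) = (i, j)` of a branch `y` with a node
`s`: either `s⌢i ≤ y` (and `j = i`), or the meet `r = y ∧ s` is proper in both, with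
`r⌢i ≤ y` and `r⌢j ≤ s`. -/
def IncFB {m : ℕ} (y : ℕ → Fin m) (s : List (Fin m)) (p : Fin m × Fin m) : Prop :=
  (p.2 = p.1 ∧ PrefixF (s ++ [p.1]) y) ∨
  (p.1 ≠ p.2 ∧ ∃ r : List (Fin m), PrefixF (r ++ [p.1]) y ∧ (r ++ [p.2]) <+: s)

/-- `IncBB y x p` is the incidence `inc(y, x) = p` of two distinct branches: at the first
coordinate `k` where they diverge, `p = (y k, x k)`. -/
def IncBB {m : ℕ} (y x : ℕ → Fin m) (p : Fin m × Fin m) : Prop :=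
  ∃ k : ℕ, (∀ l < k, y l = x l) ∧ y k ≠ x k ∧ p = (y k, x k)

/-- The underlying Polish set `X_𝔓 = m^{<ω} ∪ (m^ω × 𝔓)`. -/
def XP (m : ℕ) (PP : Set (Set (Fin m × Fin m))) : Type :=
  List (Fin m) ⊕ ((ℕ → Fin m) × ↥PP)

open Classical in
/-- The function `f_s : X_𝔓 → {0,1}`: `f_s(t) = 1` iff `t ≤ s`, and `f_s(y,Q) = 1` iff
`inc(y,s) ∈ Q`. -/
noncomputable def ffun (m : ℕ) (PP : Set (Set (Fin m × Fin m))) (s : List (Fin m)) :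
    XP m PP → Bool := fun z =>
  match z with
  | .inl t => decide (t <+: s)
  | .inr yQ => if ∃ p ∈ (yQ.2 : Set (Fin m × Fin m)), IncFB yQ.1 s p then true else false

open Classical in
/-- The function `f_{(x,P)} : X_𝔓 → {0,1}`: `f_{(x,P)}(t) = 1` iff `t ≤ x`, and
`f_{(x,P)}(y,Q) = 1` iff (`y = x` and `Q = P`) or (`y ≠ x` and `inc(y,x) ∈ Q`). -/
noncomputable def fbr (m : ℕ) (PP : Set (Set (Fin m × Fin m))) (x : ℕ → Fin m) (P : ↥PP) :
    XP m PP → Bool := fun z =>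
  match z with
  | .inl t => if PrefixF t x then true else false
  | .inr yQ =>
      if (yQ.1 = x ∧ yQ.2 = P) ∨
         (yQ.1 ≠ x ∧ ∃ p ∈ (yQ.2 : Set (Fin m × Fin m)), IncBB yQ.1 x p)
      then true else false

/-- `K_1(𝔓)`: the pointwise closure of `{f_s : s ∈ m^{<ω}}` in `{0,1}^{X_𝔓}`. -/
def K1 (m : ℕ) (PP : Set (Set (Fin m × Fin m))) : Set (XP m PP → Bool) :=
  closure (Set.range (ffun m PP))


namespace K1Aux
variable {m : ℕ}

def seg (z : ℕ → Fin m) (n : ℕ) : List (Fin m) := List.ofFn fun k : Fin n => z k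

@[simp] lemma seg_length (z : ℕ → Fin m) (n : ℕ) : (seg z n).length = n :=
  List.length_ofFn

lemma seg_getElem (z : ℕ → Fin m) {n k : ℕ} (h : k < (seg z n).length) :
    (seg z n)[k] = z k := by
  simp [seg]

lemma prefixF_iff_getElem {t : List (Fin m)} {z : ℕ → Fin m} :
    PrefixF t z ↔ ∀ k (h : k < t.length), t[k] = z k := by
  simp [PrefixF, List.get_eq_getElem]

lemma prefixF_seg (z : ℕ → Fin m) (n : ℕ) : PrefixF (seg z n) z := by
  intro k h
  simp [seg, List.get_eq_getElem]

lemma prefix_seg_iff {t : List (Fin m)} {z : ℕ → Fin m} {n : ℕ} :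
    t <+: seg z n ↔ t.length ≤ n ∧ PrefixF t z := by
  constructor
  · intro h
    refine ⟨by simpa using h.length_le, prefixF_iff_getElem.mpr fun k hk => ?_⟩
    rw [h.getElem hk, seg_getElem]
  · rintro ⟨hlen, hpre⟩
    rw [List.prefix_iff_eq_take]
    apply List.ext_getElem
    · simp [hlen]
    · intro k h1 h2
      rw [List.getElem_take, seg_getElem]
      exact prefixF_iff_getElem.mp hpre k h1

lemma seg_prefix_seg (z : ℕ → Fin m) {a b : ℕ} (h : a ≤ b) : seg z a <+: seg z b :=
  prefix_seg_iff.mpr ⟨by simpa using h, prefixF_seg z a⟩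

lemma prefixF_concat {r : List (Fin m)} {c : Fin m} {z : ℕ → Fin m} :
    PrefixF (r ++ [c]) z ↔ PrefixF r z ∧ c = z r.length := by
  rw [prefixF_iff_getElem, prefixF_iff_getElem]
  constructor
  · intro h
    refine ⟨fun k hk => ?_, ?_⟩
    · have h' := h k (by simp; omega)
      rwa [List.getElem_append_left hk] at h'
    · have h' := h r.length (by simp)
      rwa [List.getElem_concat_length rfl] at h'
  · rintro ⟨h1, h2⟩ k hk
    rcases Nat.lt_or_ge k r.length with hlt | hge
    · rw [List.getElem_append_left hlt]
      exact h1 k hlt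
    · have hk' : k = r.length := by simp at hk; omega
      subst hk'
      rw [List.getElem_concat_length rfl]
      exact h2

lemma seg_succ (z : ℕ → Fin m) (n : ℕ) : seg z (n+1) = seg z n ++ [z n] := by
  rw [seg, List.ofFn_succ', List.concat_eq_append]
  simp [seg, Fin.coe_castSucc, Fin.val_last]

lemma incBB_iff {y z : ℕ → Fin m} {k : ℕ} (hlt : ∀ l < k, y l = z l) (hk : y k ≠ z k)
    (p : Fin m × Fin m) : IncBB y z p ↔ p = (y k, z k) := by
  constructor
  · rintro ⟨k', hlt', hk', rfl⟩
    have hkk : k' = k := by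
      by_contra hne
      rcases Nat.lt_or_ge k' k with h | h
      · exact hk' (hlt _ h)
      · exact hk (hlt' _ (by omega))
    subst hkk; rfl
  · rintro rfl
    exact ⟨k, hlt, hk, rfl⟩

lemma incFB_self {z : ℕ → Fin m} {c : Fin m} {n : ℕ} (hc : c ≠ z n) (p : Fin m × Fin m) :
    IncFB z (seg z n ++ [c]) p ↔ p = (z n, c) := by
  constructor
  · rintro (⟨h1, h2⟩ | ⟨h1, r, h2, h3⟩)
    · exfalso
      have ha := (prefixF_concat.mp h2).1
      have hb := (prefixF_concat.mp ha).2
      exact hc (by simpa using hb)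
    · rcases List.prefix_concat_iff.mp h3 with heq | hpre
      · obtain ⟨hr, hc2⟩ := List.append_inj' heq rfl
        subst hr
        have hp2 : p.2 = c := by simpa using hc2
        have hp1 : p.1 = z n := by simpa using (prefixF_concat.mp h2).2
        rw [Prod.ext_iff]
        exact ⟨hp1, hp2⟩
      · exfalso
        obtain ⟨hlen, hpf⟩ := prefix_seg_iff.mp hpre
        obtain ⟨hpr, hp2⟩ := prefixF_concat.mp hpf
        obtain ⟨hpr', hp1⟩ := prefixF_concat.mp h2
        exact h1 (hp1.trans hp2.symm)
  · rintro rfl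
    refine Or.inr ⟨hc.symm, seg z n, ?_, List.prefix_rfl⟩
    rw [← seg_succ]
    exact prefixF_seg z (n+1)

lemma incFB_diverge {y z : ℕ → Fin m} {k n : ℕ} (hlt : ∀ l < k, y l = z l) (hk : y k ≠ z k)
    (hn : k < n) (c : Fin m) (p : Fin m × Fin m) :
    IncFB y (seg z n ++ [c]) p ↔ p = (y k, z k) := by
  constructor
  · rintro (⟨h1, h2⟩ | ⟨h1, r, h2, h3⟩)
    · exfalso
      have ha := (prefixF_concat.mp (prefixF_concat.mp h2).1).1
      have hb := prefixF_iff_getElem.mp ha k (by simpa using hn)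
      rw [seg_getElem] at hb
      exact hk hb.symm
    · rcases List.prefix_concat_iff.mp h3 with heq | hpre
      · exfalso
        obtain ⟨hr, -⟩ := List.append_inj' heq rfl
        subst hr
        have ha := (prefixF_concat.mp h2).1
        have hb := prefixF_iff_getElem.mp ha k (by simpa using hn)
        rw [seg_getElem] at hb
        exact hk hb.symm
      · obtain ⟨hlen, hpf⟩ := prefix_seg_iff.mp hpre
        obtain ⟨hpr, hp2⟩ := prefixF_concat.mp hpf
        obtain ⟨hpr', hp1⟩ := prefixF_concat.mp h2
        have hagree : ∀ l < r.length, y l = z l := fun l hl => by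
          rw [← prefixF_iff_getElem.mp hpr' l hl, prefixF_iff_getElem.mp hpr l hl]
        have hdiff : y r.length ≠ z r.length := by
          rw [← hp1, ← hp2]; exact h1
        have hrk : r.length = k := by
          by_contra hne
          rcases Nat.lt_or_ge r.length k with h | h
          · exact hdiff (hlt _ h)
          · exact hk (hagree _ (by omega))
        rw [Prod.ext_iff]
        exact ⟨by rw [hp1, hrk], by rw [hp2, hrk]⟩
  · rintro rfl
    refine Or.inr ⟨hk, seg z k, ?_, ?_⟩
    · rw [prefixF_concat]
      refine ⟨prefixF_iff_getElem.mpr fun l hl => ?_, by simp⟩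
      rw [seg_getElem]
      exact (hlt l (by simpa using hl)).symm
    · rw [← seg_succ]
      exact (seg_prefix_seg z hn).trans (List.prefix_append _ _)

lemma piece_eq {α : Type*} {PP : Set (Set α)} (hpart : Setoid.IsPartition PP)
    {P Q : Set α} (hP : P ∈ PP) (hQ : Q ∈ PP) {p : α} (hpP : p ∈ P) (hpQ : p ∈ Q) :
    Q = P := by
  obtain ⟨B, -, hU⟩ := hpart.2 p
  rw [hU Q ⟨hQ, hpQ⟩, hU P ⟨hP, hpP⟩]

lemma cont_of_dep (F : (ℕ → Bool) → Bool) (N : ℕ)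
    (h : ∀ b b' : ℕ → Bool, (∀ k < N, b k = b' k) → F b = F b') : Continuous F := by
  have key : F = (fun v : Fin N → Bool => F fun n => if hn : n < N then v ⟨n, hn⟩ else false) ∘
      (fun b (k : Fin N) => b k) := by
    funext b
    exact h b _ fun k hk => by simp [hk]
  rw [key]
  exact continuous_of_discreteTopology.comp (continuous_pi fun k => continuous_apply _)

lemma tendsto_of_eventually_eq {f : ℕ → Bool} {L : Bool} (h : ∀ᶠ n in atTop, f n = L) :
    Tendsto f atTop (𝓝 L) :=
  tendsto_const_nhds.congr' (h.mono fun n hn => hn.symm)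

def zf {m : ℕ} (i j : Fin m) (b : ℕ → Bool) : ℕ → Fin m := fun n => if b n then i else j

lemma zf_ij {m : ℕ} (i j : Fin m) (b : ℕ → Bool) (n : ℕ) :
    zf i j b n = i ∨ zf i j b n = j := by
  unfold zf; split <;> simp

end K1Aux


namespace K1Aux

open Classical in
lemma ffun_inl (m : ℕ) (PP : Set (Set (Fin m × Fin m))) (s t : List (Fin m)) :
    ffun m PP s (Sum.inl t : XP m PP) = decide (t <+: s) := rfl

open Classical in
lemma ffun_inr (m : ℕ) (PP : Set (Set (Fin m × Fin m))) (s : List (Fin m))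
    (y : ℕ → Fin m) (Q : ↥PP) :
    ffun m PP s (Sum.inr (y, Q) : XP m PP) =
      if ∃ p ∈ (Q : Set (Fin m × Fin m)), IncFB y s p then true else false := rfl

open Classical in
lemma fbr_inl (m : ℕ) (PP : Set (Set (Fin m × Fin m))) (x : ℕ → Fin m) (P : ↥PP)
    (t : List (Fin m)) :
    fbr m PP x P (Sum.inl t : XP m PP) = if PrefixF t x then true else false := rfl

open Classical in
lemma fbr_inr (m : ℕ) (PP : Set (Set (Fin m × Fin m))) (x : ℕ → Fin m) (P : ↥PP)
    (y : ℕ → Fin m) (Q : ↥PP) :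
    fbr m PP x P (Sum.inr (y, Q) : XP m PP) =
      if (y = x ∧ Q = P) ∨ (y ≠ x ∧ ∃ p ∈ (Q : Set (Fin m × Fin m)), IncBB y x p)
      then true else false := rfl

lemma fbr_mem_K1 {m : ℕ} {PP : Set (Set (Fin m × Fin m))} (hpart : Setoid.IsPartition PP)
    {i j : Fin m} (hij : i ≠ j) {P : Set (Fin m × Fin m)} (hP : P ∈ PP)
    (h1 : (i, j) ∈ P) (h2 : (j, i) ∈ P) {z : ℕ → Fin m} (hz : ∀ n, z n = i ∨ z n = j) :
    fbr m PP z ⟨P, hP⟩ ∈ K1 m PP := by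
  classical
  set c : ℕ → Fin m := fun n => if z n = i then j else i with hcdef
  have hcz : ∀ n, c n ≠ z n ∧ (z n, c n) ∈ P := fun n => by
    rcases hz n with h | h <;> simp [hcdef, h, hij, hij.symm, h1, h2]
  have key : Tendsto (fun n => ffun m PP (seg z n ++ [c n])) atTop
      (𝓝 (fbr m PP z ⟨P, hP⟩)) := by
    rw [tendsto_pi_nhds]
    intro w
    rcases w with t | ⟨y, Q⟩
    · apply tendsto_of_eventually_eq
      filter_upwards [eventually_ge_atTop t.length] with n hn
      rw [ffun_inl, fbr_inl]
      have hiff : (t <+: seg z n ++ [c n]) ↔ PrefixF t z := by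
        constructor
        · intro hpre
          apply prefixF_iff_getElem.mpr
          intro k hk
          have hk' : k < (seg z n).length := by simp; omega
          rw [hpre.getElem hk, List.getElem_append_left hk', seg_getElem]
        · intro hpf
          exact (prefix_seg_iff.mpr ⟨hn, hpf⟩).trans (List.prefix_append _ _)
      by_cases hpf : PrefixF t z
      · rw [if_pos hpf]
        simp [hiff.mpr hpf]
      · rw [if_neg hpf]
        simpa using fun h => hpf (hiff.mp h)
    · by_cases hy : y = z
      · subst hy
        apply tendsto_of_eventually_eq
        filter_upwards with n
        rw [ffun_inr, fbr_inr]
        have hiff : (∃ p ∈ (Q : Set (Fin m × Fin m)), IncFB y (seg y n ++ [c n]) p) ↔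
            (Q : Set (Fin m × Fin m)) = P := by
          constructor
          · rintro ⟨p, hpQ, hinc⟩
            rw [incFB_self (hcz n).1 p] at hinc
            subst hinc
            exact piece_eq hpart hP Q.2 (hcz n).2 hpQ
          · intro hQP
            refine ⟨(y n, c n), ?_, (incFB_self (hcz n).1 _).mpr rfl⟩
            rw [hQP]; exact (hcz n).2
        have hiff2 : ((y = y ∧ Q = (⟨P, hP⟩ : ↥PP)) ∨
            (y ≠ y ∧ ∃ p ∈ (Q : Set (Fin m × Fin m)), IncBB y y p)) ↔
            (Q : Set (Fin m × Fin m)) = P := by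
          constructor
          · rintro (⟨-, h⟩ | ⟨hne, -⟩)
            · exact congrArg Subtype.val h
            · exact absurd rfl hne
          · exact fun h => Or.inl ⟨rfl, Subtype.ext h⟩
        exact if_congr (hiff.trans hiff2.symm) rfl rfl
      · have hd : ∃ k, y k ≠ z k := Function.ne_iff.mp hy
        have hk : y (Nat.find hd) ≠ z (Nat.find hd) := Nat.find_spec hd
        have hlt : ∀ l < Nat.find hd, y l = z l := fun l hl =>
          not_not.mp (Nat.find_min hd hl)
        apply tendsto_of_eventually_eq
        filter_upwards [eventually_gt_atTop (Nat.find hd)] with n hn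
        rw [ffun_inr, fbr_inr]
        have hiff1 : (∃ p ∈ (Q : Set (Fin m × Fin m)), IncFB y (seg z n ++ [c n]) p) ↔
            (y (Nat.find hd), z (Nat.find hd)) ∈ (Q : Set (Fin m × Fin m)) := by
          constructor
          · rintro ⟨p, hpQ, hinc⟩
            rwa [(incFB_diverge hlt hk hn (c n) p).mp hinc] at hpQ
          · exact fun h => ⟨_, h, (incFB_diverge hlt hk hn (c n) _).mpr rfl⟩
        have hiff2 : ((y = z ∧ Q = (⟨P, hP⟩ : ↥PP)) ∨
            (y ≠ z ∧ ∃ p ∈ (Q : Set (Fin m × Fin m)), IncBB y z p)) ↔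
            (y (Nat.find hd), z (Nat.find hd)) ∈ (Q : Set (Fin m × Fin m)) := by
          constructor
          · rintro (⟨h, -⟩ | ⟨-, p, hpQ, hinc⟩)
            · exact absurd h hy
            · rwa [(incBB_iff hlt hk p).mp hinc] at hpQ
          · exact fun h => Or.inr ⟨hy, _, h, (incBB_iff hlt hk _).mpr rfl⟩
        exact if_congr (hiff1.trans hiff2.symm) rfl rfl
  exact mem_closure_of_tendsto key (Filter.Eventually.of_forall fun n => Set.mem_range_self _)

end K1Aux

/-- If `(i,j)` and `(j,i)` (with `i ≠ j`) belong to the same piece `P` of the partition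
`𝔓` of `m × m`, then the subspace `{f_{(z,P)} : z ∈ {i,j}^ω}` of `K_1(𝔓)` is
homeomorphic to the Cantor set `2^ω`; in particular `K_1(𝔓)` contains a homeomorphic
copy of the Cantor set. -/


theorem K1_contains_Cantor (m : ℕ) (PP : Set (Set (Fin m × Fin m)))
    (hpart : Setoid.IsPartition PP) (i j : Fin m) (hij : i ≠ j)
    (P : Set (Fin m × Fin m)) (hP : P ∈ PP) (h1 : (i, j) ∈ P) (h2 : (j, i) ∈ P) :
    {f : XP m PP → Bool |
        ∃ z : ℕ → Fin m, (∀ n, z n = i ∨ z n = j) ∧ f = fbr m PP z ⟨P, hP⟩} ⊆ K1 m PP ∧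
    Nonempty ((ℕ → Bool) ≃ₜ
      ↥{f : XP m PP → Bool |
          ∃ z : ℕ → Fin m, (∀ n, z n = i ∨ z n = j) ∧ f = fbr m PP z ⟨P, hP⟩}) := by
  classical
  refine ⟨?_, ?_⟩
  · rintro f ⟨z, hz, rfl⟩
    exact K1Aux.fbr_mem_K1 hpart hij hP h1 h2 hz
  · open K1Aux in
    have hΦmem : ∀ b, fbr m PP (zf i j b) ⟨P, hP⟩ ∈
        {f : XP m PP → Bool |
          ∃ z : ℕ → Fin m, (∀ n, z n = i ∨ z n = j) ∧ f = fbr m PP z ⟨P, hP⟩} :=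
      fun b => ⟨zf i j b, zf_ij i j b, rfl⟩
    open K1Aux in
    set Φ : (ℕ → Bool) → ↥{f : XP m PP → Bool |
        ∃ z : ℕ → Fin m, (∀ n, z n = i ∨ z n = j) ∧ f = fbr m PP z ⟨P, hP⟩} :=
      fun b => ⟨fbr m PP (zf i j b) ⟨P, hP⟩, hΦmem b⟩ with hΦdef
    open K1Aux in
    have hinj : Function.Injective Φ := by
      intro b b' hbb
      have hfb : fbr m PP (zf i j b) ⟨P, hP⟩ = fbr m PP (zf i j b') ⟨P, hP⟩ :=
        congrArg Subtype.val hbb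
      funext n
      have ht : fbr m PP (zf i j b) ⟨P, hP⟩ (Sum.inl (seg (zf i j b) (n+1)) : XP m PP)
          = true := by
        rw [fbr_inl, if_pos (prefixF_seg _ _)]
      rw [hfb, fbr_inl] at ht
      have hpf : PrefixF (seg (zf i j b) (n+1)) (zf i j b') := by
        by_contra h
        rw [if_neg h] at ht
        exact Bool.false_ne_true ht
      have heq := prefixF_iff_getElem.mp hpf n (by simp)
      rw [seg_getElem] at heq
      by_contra hbn
      rcases Bool.eq_false_or_eq_true (b n) with hb | hb <;>
        rcases Bool.eq_false_or_eq_true (b' n) with hb' | hb' <;>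
          simp [zf, hb, hb', hij, hij.symm] at heq hbn
    open K1Aux in
    have hsurj : Function.Surjective Φ := by
      rintro ⟨f, z, hz, rfl⟩
      refine ⟨fun n => decide (z n = i), ?_⟩
      apply Subtype.ext
      show fbr m PP (zf i j _) ⟨P, hP⟩ = fbr m PP z ⟨P, hP⟩
      have hz' : zf i j (fun n => decide (z n = i)) = z := by
        funext n
        rcases hz n with h | h <;> simp [zf, h, hij.symm]
      rw [hz']
    open K1Aux in
    have hcont : Continuous Φ := by
      apply Continuous.subtype_mk
      apply continuous_pi
      intro w
      rcases w with t | ⟨y, Q⟩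
      · apply cont_of_dep _ t.length
        intro b b' hag
        rw [fbr_inl, fbr_inl]
        refine if_congr ?_ rfl rfl
        have hzz : ∀ k < t.length, zf i j b k = zf i j b' k := fun k hk => by
          unfold zf; rw [hag k hk]
        rw [prefixF_iff_getElem, prefixF_iff_getElem]
        constructor <;> intro h k hk
        · rw [← hzz k hk]; exact h k hk
        · rw [hzz k hk]; exact h k hk
      · by_cases hy : ∀ k, y k = i ∨ y k = j
        · have hconst : ∀ b, fbr m PP (zf i j b) ⟨P, hP⟩ (Sum.inr (y, Q) : XP m PP) =
              if (Q : Set (Fin m × Fin m)) = P then true else false := by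
            intro b
            rw [fbr_inr]
            refine if_congr ?_ rfl rfl
            have hmem : ∀ k, y k ≠ zf i j b k → (y k, zf i j b k) ∈ P := by
              intro k hk
              rcases hy k with h' | h' <;> rcases zf_ij i j b k with h'' | h''
              · exact absurd (h'.trans h''.symm) hk
              · rw [h', h'']; exact h1
              · rw [h', h'']; exact h2
              · exact absurd (h'.trans h''.symm) hk
            by_cases hyz : y = zf i j b
            · constructor
              · rintro (⟨-, h⟩ | ⟨hne, -⟩)
                · exact congrArg Subtype.val h
                · exact absurd hyz hne
              · exact fun h => Or.inl ⟨hyz, Subtype.ext h⟩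
            · constructor
              · rintro (⟨h, -⟩ | ⟨-, p, hpQ, k, hlt, hk, rfl⟩)
                · exact absurd h hyz
                · exact piece_eq hpart hP Q.2 (hmem k hk) hpQ
              · intro hQP
                have hd : ∃ k, y k ≠ zf i j b k := Function.ne_iff.mp hyz
                refine Or.inr ⟨hyz, (y (Nat.find hd), zf i j b (Nat.find hd)), ?_,
                  ⟨Nat.find hd, fun l hl => not_not.mp (Nat.find_min hd hl),
                    Nat.find_spec hd, rfl⟩⟩
                rw [hQP]
                exact hmem _ (Nat.find_spec hd)
          simp only [hΦdef, hconst]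
          exact continuous_const
        · push_neg at hy
          obtain ⟨k, hk1, hk2⟩ := hy
          apply cont_of_dep _ (k+1)
          intro b b' hag
          rw [fbr_inr, fbr_inr]
          refine if_congr ?_ rfl rfl
          have hzz : ∀ l ≤ k, zf i j b l = zf i j b' l := fun l hl => by
            unfold zf; rw [hag l (by omega)]
          have hney : ∀ u : ℕ → Bool, y ≠ zf i j u := by
            intro u h
            rcases zf_ij i j u k with h' | h'
            · exact hk1 ((congrFun h k).trans h')
            · exact hk2 ((congrFun h k).trans h')
          have key : ∀ u u' : ℕ → Bool, (∀ l ≤ k, zf i j u l = zf i j u' l) →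
              ∀ p, IncBB y (zf i j u) p → IncBB y (zf i j u') p := by
            rintro u u' hagree p ⟨k₀, hlt, hk₀, rfl⟩
            have hk₀le : k₀ ≤ k := by
              by_contra h
              push_neg at h
              have h' := hlt k h
              rcases zf_ij i j u k with h'' | h''
              · exact hk1 (h'.trans h'')
              · exact hk2 (h'.trans h'')
            refine ⟨k₀, fun l hl => (hlt l hl).trans (hagree l (by omega)), ?_, ?_⟩
            · rw [← hagree k₀ hk₀le]; exact hk₀
            · rw [← hagree k₀ hk₀le]
          constructor
          · rintro (⟨h, -⟩ | ⟨-, p, hpQ, h⟩)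
            · exact absurd h (hney b)
            · exact Or.inr ⟨hney b', p, hpQ, key b b' hzz p h⟩
          · rintro (⟨h, -⟩ | ⟨-, p, hpQ, h⟩)
            · exact absurd h (hney b')
            · exact Or.inr ⟨hney b, p, hpQ,
                key b' b (fun l hl => (hzz l hl).symm) p h⟩
    exact ⟨Continuous.homeoOfEquivCompactToT2 (f := Equiv.ofBijective Φ ⟨hinj, hsurj⟩) hcont⟩
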